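/- arXiv:1610.03972 — 3 statements merged into one kernel-verified Lean document; each statement's English description precedes it below -/
import Mathlib

section
/- If G is a connected graph in class W_2 with G ≠ K_2, then for every vertex v of G there exist two disjoint maximum independent sets S_1, S_2 of G with v ∉ S_1 ∪ S_2; in particular, |V(G)| ≥ 2α(G) + 1. -/
open Finset

/-- A finset of vertices is independent: no two of its members are adjacent. -/
def IndepSet {V : Type*} (G : SimpleGraph V) (A : Finset V) : Prop :=
  ∀ u ∈ A, ∀ v ∈ A, ¬ G.Adj u v

open scoped Classical in
/-- Maximum size of an independent set contained in `s` (independence number of `G[s]`). -/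
noncomputable def alphaOn {V : Type*} [Fintype V] (G : SimpleGraph V) (s : Finset V) : ℕ :=
  ((s.powerset).filter (fun A => IndepSet G A)).sup Finset.card

/-- The independence number of `G`. -/
noncomputable def alpha {V : Type*} [Fintype V] (G : SimpleGraph V) : ℕ :=
  alphaOn G Finset.univ

/-- The induced subgraph `G[s]` is well-covered: every maximal independent subset of `s`
has maximum cardinality. -/
def WellCoveredOn {V : Type*} [Fintype V] (G : SimpleGraph V) (s : Finset V) : Prop :=
  ∀ A ⊆ s, IndepSet G A →
    (∀ B ⊆ s, IndepSet G B → A ⊆ B → A = B) → A.card = alphaOn G s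

/-- `G` is well-covered. -/
def WellCovered {V : Type*} [Fintype V] (G : SimpleGraph V) : Prop :=
  WellCoveredOn G Finset.univ

open scoped Classical in
/-- The open neighborhood `N(A)`: vertices having a neighbor in `A`. -/
noncomputable def nbhd {V : Type*} [Fintype V] (G : SimpleGraph V) (A : Finset V) : Finset V :=
  Finset.univ.filter (fun v => ∃ u ∈ A, G.Adj u v)

/-- The closed neighborhood `N[A] = A ∪ N(A)`. -/
noncomputable def closedNbhd {V : Type*} [Fintype V] [DecidableEq V] (G : SimpleGraph V) (A : Finset V) :
    Finset V :=
  A ∪ nbhd G A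

/-- The induced subgraph `G[s]` is in class `W₂`: every two disjoint independent subsets of `s`
extend to two disjoint maximum independent subsets of `s`. -/
def W2On {V : Type*} [Fintype V] (G : SimpleGraph V) (s : Finset V) : Prop :=
  ∀ A ⊆ s, ∀ B ⊆ s, IndepSet G A → IndepSet G B → Disjoint A B →
    ∃ S₁ ⊆ s, ∃ S₂ ⊆ s, IndepSet G S₁ ∧ IndepSet G S₂ ∧
      S₁.card = alphaOn G s ∧ S₂.card = alphaOn G s ∧ Disjoint S₁ S₂ ∧ A ⊆ S₁ ∧ B ⊆ S₂

/-- `G` belongs to class `W₂`. -/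
def W2 {V : Type*} [Fintype V] (G : SimpleGraph V) : Prop :=
  W2On G Finset.univ


lemma indep_card_le {V : Type*} [Fintype V] (G : SimpleGraph V) {A : Finset V}
    (hA : IndepSet G A) : A.card ≤ alpha G := by
  classical
  refine Finset.le_sup (f := Finset.card) ?_
  simp only [Finset.mem_filter, Finset.mem_powerset]
  exact ⟨Finset.subset_univ _, hA⟩

lemma indep_singleton {V : Type*} (G : SimpleGraph V) (a : V) : IndepSet G {a} := by
  intro x hx y hy
  simp only [Finset.mem_singleton] at hx hy
  subst hx; subst hy; exact G.irrefl

lemma indep_empty {V : Type*} (G : SimpleGraph V) : IndepSet G ∅ := by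
  intro x hx; simp at hx


/-- In a connected W₂ graph other than K₂, every vertex avoids two disjoint maximum
independent sets; in particular |V(G)| ≥ 2α(G) + 1. -/
theorem stmt5 {V : Type*} [Fintype V] [DecidableEq V] (G : SimpleGraph V)
    (hconn : G.Connected) (hK2 : ¬ Nonempty (G ≃g (⊤ : SimpleGraph (Fin 2))))
    (h : W2 G) :
    (∀ v : V, ∃ S₁ S₂ : Finset V, IndepSet G S₁ ∧ IndepSet G S₂ ∧
      S₁.card = alpha G ∧ S₂.card = alpha G ∧ Disjoint S₁ S₂ ∧ v ∉ S₁ ∪ S₂) ∧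
    2 * alpha G + 1 ≤ Fintype.card V := by
  classical
  have hne : Nonempty V := hconn.nonempty
  have main : ∀ v : V, ∃ S₁ S₂ : Finset V, IndepSet G S₁ ∧ IndepSet G S₂ ∧
      S₁.card = alpha G ∧ S₂.card = alpha G ∧ Disjoint S₁ S₂ ∧ v ∉ S₁ ∪ S₂ := by
    intro v
    have hnbr : ∃ u, G.Adj v u := by
      by_contra hno
      push_neg at hno
      have hall : ∀ x : V, x = v := by
        intro x
        obtain ⟨p⟩ := hconn.preconnected v x
        cases p with
        | nil => rfl
        | cons h q => exact absurd h (hno _)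
      obtain ⟨S₁, -, S₂, -, hS₁i, hS₂i, hc₁, hc₂, hdisj, -, -⟩ :=
        h ∅ (Finset.empty_subset _) ∅ (Finset.empty_subset _) (indep_empty G) (indep_empty G)
          (Finset.disjoint_empty_left ∅)
      have hα : 1 ≤ alphaOn G Finset.univ := by
        have := indep_card_le G (indep_singleton G v)
        simpa [alpha] using this
      have hsub : S₁ ∪ S₂ ⊆ {v} := by
        intro x _
        simp [hall x]
      have hcard := Finset.card_le_card hsub
      rw [Finset.card_union_of_disjoint hdisj, hc₁, hc₂, Finset.card_singleton] at hcard
      show False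
      have : S₁.card = alpha G := hc₁
      omega
    obtain ⟨u, hu⟩ := hnbr
    by_cases hw : ∃ w, G.Adj v w ∧ w ≠ u
    · obtain ⟨w, hvw, hwu⟩ := hw
      obtain ⟨S₁, -, S₂, -, hS₁i, hS₂i, hc₁, hc₂, hdisj, hu₁, hw₂⟩ :=
        h {u} (Finset.subset_univ _) {w} (Finset.subset_univ _)
          (indep_singleton G u) (indep_singleton G w)
          (Finset.disjoint_singleton.mpr (Ne.symm hwu))
      refine ⟨S₁, S₂, hS₁i, hS₂i, hc₁, hc₂, hdisj, ?_⟩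
      simp only [Finset.mem_union]
      rintro (hv | hv)
      · exact hS₁i v hv u (hu₁ (Finset.mem_singleton_self u)) hu
      · exact hS₂i v hv w (hw₂ (Finset.mem_singleton_self w)) hvw
    · push_neg at hw
      exfalso
      by_cases hw2 : ∃ w, G.Adj u w ∧ w ≠ v
      · obtain ⟨w, huw, hwv⟩ := hw2
        obtain ⟨T₁, -, T₂, -, hT₁i, hT₂i, hc₁, hc₂, hdisj, hv₁, hw₂⟩ :=
          h {v} (Finset.subset_univ _) {w} (Finset.subset_univ _)
            (indep_singleton G v) (indep_singleton G w)
            (Finset.disjoint_singleton.mpr (Ne.symm hwv))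
        have hvT₂ : v ∉ T₂ := fun hvv =>
          (Finset.disjoint_left.mp hdisj (hv₁ (Finset.mem_singleton_self v))) hvv
        have huT₂ : u ∈ T₂ := by
          by_contra huT
          have hind : IndepSet G (insert v T₂) := by
            intro a ha b hb
            rcases Finset.mem_insert.mp ha with rfl | ha'
            · rcases Finset.mem_insert.mp hb with rfl | hb'
              · exact G.irrefl
              · intro had
                exact huT ((hw b had) ▸ hb')
            · rcases Finset.mem_insert.mp hb with rfl | hb'
              · intro had
                exact huT ((hw a had.symm) ▸ ha')
              · exact hT₂i a ha' b hb'
          have hcard : (insert v T₂).card = alpha G + 1 := by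
            rw [Finset.card_insert_of_notMem hvT₂, hc₂]; rfl
          have hle := indep_card_le G hind
          omega
        exact hT₂i u huT₂ w (hw₂ (Finset.mem_singleton_self w)) huw
      · push_neg at hw2
        apply hK2
        have hvu : v ≠ u := G.ne_of_adj hu
        have hall : ∀ x : V, x = v ∨ x = u := by
          have key : ∀ (a x : V) (p : G.Walk a x), (a = v ∨ a = u) → (x = v ∨ x = u) := by
            intro a x p
            induction p with
            | nil => exact id
            | cons hadj q ih =>
              intro ha
              apply ih
              rcases ha with rfl | rfl
              · exact Or.inr (hw _ hadj)
              · exact Or.inl (hw2 _ hadj)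
          intro x
          obtain ⟨p⟩ := hconn.preconnected v x
          exact key v x p (Or.inl rfl)
        refine ⟨⟨⟨fun x => if x = v then 0 else 1, fun i => if i = 0 then v else u,
          ?_, ?_⟩, ?_⟩⟩
        · intro x
          rcases hall x with rfl | rfl
          · simp
          · simp [Ne.symm hvu]
        · intro i
          fin_cases i
          · simp
          · simp [Ne.symm hvu]
        · intro a b
          rcases hall a with rfl | rfl <;> rcases hall b with rfl | rfl <;>
            simp [SimpleGraph.top_adj, Ne.symm hvu, hvu, hu, hu.symm, G.irrefl]
  refine ⟨main, ?_⟩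
  obtain ⟨v⟩ := hne
  obtain ⟨S₁, S₂, -, -, hc₁, hc₂, hdisj, hvmem⟩ := main v
  have h1 : (insert v (S₁ ∪ S₂)).card = 2 * alpha G + 1 := by
    rw [Finset.card_insert_of_notMem hvmem, Finset.card_union_of_disjoint hdisj, hc₁, hc₂]
    ring
  calc 2 * alpha G + 1 = (insert v (S₁ ∪ S₂)).card := h1.symm
    _ ≤ (Finset.univ : Finset V).card := Finset.card_le_univ _
    _ = Fintype.card V := Finset.card_univ
end

section
/- If G is a connected graph in class W_2 with G ≠ K_2, then |B| < |N(B)| for every non-empty independent set B of G. -/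
open Finset

section helpers
variable {V : Type*} [Fintype V] {G : SimpleGraph V}

lemma indep_mono {A B : Finset V} (h : IndepSet G B) (hAB : A ⊆ B) : IndepSet G A :=
  fun u hu v hv => h u (hAB hu) v (hAB hv)

lemma card_le_alpha {A : Finset V} (h : IndepSet G A) : A.card ≤ alpha G := by
  classical
  refine Finset.le_sup (f := Finset.card) ?_
  simp [alpha, alphaOn, Finset.mem_filter, h]

lemma mem_nbhd {A : Finset V} {v : V} : v ∈ nbhd G A ↔ ∃ u ∈ A, G.Adj u v := by
  simp [nbhd]

lemma swap_indep [DecidableEq V] {A S : Finset V} (hA : IndepSet G A) (hS : IndepSet G S) :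
    IndepSet G ((S \ nbhd G A) ∪ A) := by
  intro u hu v hv hadj
  simp only [Finset.mem_union, Finset.mem_sdiff] at hu hv
  rcases hu with ⟨huS, huN⟩ | huA
  · rcases hv with ⟨hvS, _⟩ | hvA
    · exact hS u huS v hvS hadj
    · exact huN (mem_nbhd.2 ⟨v, hvA, hadj.symm⟩)
  · rcases hv with ⟨_, hvN⟩ | hvA
    · exact hvN (mem_nbhd.2 ⟨u, huA, hadj⟩)
    · exact hA u huA v hvA hadj

lemma swap_card_le [DecidableEq V] {A S : Finset V} (hA : IndepSet G A)
    (hS : IndepSet G S) (hd : Disjoint A S) (hScard : S.card = alpha G) :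
    A.card ≤ (S ∩ nbhd G A).card := by
  have hle := card_le_alpha (swap_indep hA hS)
  have hdisj : Disjoint (S \ nbhd G A) A :=
    Finset.disjoint_of_subset_left Finset.sdiff_subset hd.symm
  rw [Finset.card_union_of_disjoint hdisj] at hle
  have h1 : (S ∩ nbhd G A).card + (S \ nbhd G A).card = S.card :=
    Finset.card_inter_add_card_sdiff S (nbhd G A)
  have h2 : (S ∩ nbhd G A).card ≤ S.card := Finset.card_le_card Finset.inter_subset_left
  omega

lemma walk_closed {X : Finset V} (hX : ∀ u ∈ X, ∀ v, G.Adj u v → v ∈ X) :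
    ∀ {a b : V}, G.Walk a b → a ∈ X → b ∈ X := by
  intro a b w
  induction w with
  | nil => exact id
  | cons h p ih => exact fun ha => ih (hX _ ha _ h)

end helpers

/-- In a connected W₂ graph other than K₂, |B| < |N(B)| for every non-empty independent
set B. -/
theorem stmt10 {V : Type*} [Fintype V] (G : SimpleGraph V)
    (hconn : G.Connected) (hK2 : ¬ Nonempty (G ≃g (⊤ : SimpleGraph (Fin 2))))
    (h : W2 G) :
    ∀ B : Finset V, IndepSet G B → B.Nonempty → B.card < (nbhd G B).card := by
  classical
  intro B hB hBne
  by_contra hlt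
  push_neg at hlt
  set C := nbhd G B with hCdef
  -- B and C are disjoint
  have hBC : Disjoint B C := by
    rw [Finset.disjoint_left]
    intro x hxB hxC
    obtain ⟨u, huB, hadj⟩ := mem_nbhd.1 hxC
    exact hB u huB x hxB hadj
  have hindE : IndepSet G (∅ : Finset V) := by intro u hu; simp at hu
  -- Step 1: extend (B, ∅)
  obtain ⟨S1, -, S2, -, hS1i, hS2i, hc1, hc2, hd12, hBS1, -⟩ :=
    h B (Finset.subset_univ _) ∅ (Finset.empty_subset _) hB hindE (Finset.disjoint_empty_right _)
  have hc2' : S2.card = alpha G := hc2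
  have hkey : B.card ≤ (S2 ∩ C).card :=
    swap_card_le hB hS2i (hd12.mono_left hBS1) hc2'
  have hIC : (S2 ∩ C).card ≤ C.card := Finset.card_le_card Finset.inter_subset_right
  have hCcard : C.card = B.card := le_antisymm hlt (hkey.trans hIC)
  have hCS2 : C ⊆ S2 := by
    have heq : S2 ∩ C = C :=
      Finset.eq_of_subset_of_card_le Finset.inter_subset_right (by omega)
    intro x hx
    exact Finset.mem_inter.1 (heq.symm ▸ hx) |>.1
  have hCi : IndepSet G C := indep_mono hS2i hCS2
  by_cases hNC : ∀ d ∈ nbhd G C, d ∈ B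
  · -- bipartite case: V = B ∪ C
    have hclosed : ∀ u ∈ B ∪ C, ∀ v, G.Adj u v → v ∈ B ∪ C := by
      intro u hu v hadj
      rcases Finset.mem_union.1 hu with hu' | hu'
      · exact Finset.mem_union.2 (Or.inr (mem_nbhd.2 ⟨u, hu', hadj⟩))
      · exact Finset.mem_union.2 (Or.inl (hNC v (mem_nbhd.2 ⟨u, hu', hadj⟩)))
    obtain ⟨b0, hb0⟩ := hBne
    have huniv : (Finset.univ : Finset V) = B ∪ C := by
      apply Finset.Subset.antisymm _ (Finset.subset_univ _)
      intro v _
      obtain ⟨w⟩ := hconn.preconnected b0 v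
      exact walk_closed hclosed w (Finset.mem_union.2 (Or.inl hb0))
    have halpha : alpha G = B.card := by
      have hS2C : S2 = C := by
        apply Finset.Subset.antisymm _ hCS2
        intro x hx
        have hxu : x ∈ B ∪ C := huniv ▸ Finset.mem_univ x
        rcases Finset.mem_union.1 hxu with hxB | hxC
        · exact absurd hx (Finset.disjoint_left.1 hd12 (hBS1 hxB))
        · exact hxC
      rw [← hc2', hS2C, hCcard]
    rcases eq_or_lt_of_le (Finset.one_le_card.2 ⟨b0, hb0⟩ : 1 ≤ B.card) with hk1 | hk2
    · -- |B| = 1 : G is K2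
      obtain ⟨b, hBeq⟩ := Finset.card_eq_one.1 hk1.symm
      obtain ⟨c, hCeq⟩ := Finset.card_eq_one.1 (by omega : C.card = 1)
      have hadjbc : G.Adj b c := by
        obtain ⟨u, huB, hadj⟩ := mem_nbhd.1 (hCeq ▸ Finset.mem_singleton_self c : c ∈ C)
        rwa [show u = b from by simpa [hBeq] using huB] at hadj
      have hmem : ∀ v : V, v = b ∨ v = c := by
        intro v
        have hv : v ∈ B ∪ C := huniv ▸ Finset.mem_univ v
        rw [hBeq, hCeq] at hv
        simpa using hv
      refine hK2 ⟨⟨⟨fun v => if v = b then 0 else 1, fun i => if i = 0 then b else c,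
        ?_, ?_⟩, ?_⟩⟩
      · intro v
        rcases hmem v with rfl | rfl
        · simp
        · simp [hadjbc.ne']
      · intro i
        fin_cases i <;> simp [hadjbc.ne']
      · intro u v
        rcases hmem u with rfl | rfl <;> rcases hmem v with rfl | rfl <;>
          simp [hadjbc, hadjbc.symm, hadjbc.ne, hadjbc.ne', G.irrefl]
    · -- |B| ≥ 2
      obtain ⟨b1, hb1, b2, hb2, hne⟩ := Finset.one_lt_card.1 hk2
      have hs1 : IndepSet G {b1} := by
        intro u hu v hv hadj
        simp only [Finset.mem_singleton] at hu hv
        subst hu; subst hv; exact G.irrefl hadj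
      have hs2 : IndepSet G {b2} := by
        intro u hu v hv hadj
        simp only [Finset.mem_singleton] at hu hv
        subst hu; subst hv; exact G.irrefl hadj
      obtain ⟨U1, -, U2, -, hU1i, hU2i, hu1, hu2, hdU, hb1U, hb2U⟩ :=
        h {b1} (Finset.subset_univ _) {b2} (Finset.subset_univ _) hs1 hs2
          (by simp [Finset.disjoint_singleton, hne, hne.symm])
      have hu1' : U1.card = alpha G := hu1
      have hu2' : U2.card = alpha G := hu2
      have hUU : U1 ∪ U2 = Finset.univ := by
        apply Finset.eq_of_subset_of_card_le (Finset.subset_univ _)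
        rw [Finset.card_union_of_disjoint hdU, huniv, Finset.card_union_of_disjoint hBC]
        omega
      set X : Finset V := (B ∩ U1) ∪ (C ∩ U2) with hXdef
      have hXclosed : ∀ u ∈ X, ∀ v, G.Adj u v → v ∈ X := by
        intro u hu v hadj
        have hvU : v ∈ U1 ∪ U2 := hUU ▸ Finset.mem_univ v
        rcases Finset.mem_union.1 hu with hu' | hu'
        · obtain ⟨huB, huU1⟩ := Finset.mem_inter.1 hu'
          have hvC : v ∈ C := mem_nbhd.2 ⟨u, huB, hadj⟩
          rcases Finset.mem_union.1 hvU with hv1 | hv2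
          · exact absurd hadj (hU1i u huU1 v hv1)
          · exact Finset.mem_union.2 (Or.inr (Finset.mem_inter.2 ⟨hvC, hv2⟩))
        · obtain ⟨huC, huU2⟩ := Finset.mem_inter.1 hu'
          have hvB : v ∈ B := hNC v (mem_nbhd.2 ⟨u, huC, hadj⟩)
          rcases Finset.mem_union.1 hvU with hv1 | hv2
          · exact Finset.mem_union.2 (Or.inl (Finset.mem_inter.2 ⟨hvB, hv1⟩))
          · exact absurd hadj (hU2i u huU2 v hv2)
      have hb1X : b1 ∈ X :=
        Finset.mem_union.2 (Or.inl (Finset.mem_inter.2 ⟨hb1, hb1U (Finset.mem_singleton_self b1)⟩))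
      have hb2X : b2 ∉ X := by
        intro hx
        rcases Finset.mem_union.1 hx with hx' | hx'
        · exact Finset.disjoint_left.1 hdU (Finset.mem_inter.1 hx').2
            (hb2U (Finset.mem_singleton_self b2))
        · exact Finset.disjoint_left.1 hBC hb2 (Finset.mem_inter.1 hx').1
      obtain ⟨w⟩ := hconn.preconnected b1 b2
      exact hb2X (walk_closed hXclosed w hb1X)
  · -- exists d ∈ N(C) \ B : contradiction via ({d}, B)
    push_neg at hNC
    obtain ⟨d, hdN, hdB⟩ := hNC
    have hdind : IndepSet G {d} := by
      intro u hu v hv hadj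
      simp only [Finset.mem_singleton] at hu hv
      subst hu; subst hv; exact G.irrefl hadj
    obtain ⟨T1, -, T2, -, hT1i, hT2i, ht1, ht2, hdT, hdT1, hBT2⟩ :=
      h {d} (Finset.subset_univ _) B (Finset.subset_univ _) hdind hB
        (Finset.disjoint_singleton_left.2 hdB)
    have ht1' : T1.card = alpha G := ht1
    have hkey2 : B.card ≤ (T1 ∩ C).card :=
      swap_card_le hB hT1i (hdT.symm.mono_left hBT2) ht1'
    have hCT1 : C ⊆ T1 := by
      have heq : T1 ∩ C = C :=
        Finset.eq_of_subset_of_card_le Finset.inter_subset_right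
          (by have h9 : (T1 ∩ C).card ≤ T1.card ⊔ (T1 ∩ C).card := le_sup_right; omega)
      intro x hx
      exact Finset.mem_inter.1 (heq.symm ▸ hx) |>.1
    obtain ⟨c, hcC, hcadj⟩ := mem_nbhd.1 hdN
    exact hT1i c (hCT1 hcC) d (hdT1 (Finset.mem_singleton_self d)) hcadj
end

section
/- K_2 is the only connected bipartite graph in class W_2: if G is connected, bipartite and belongs to W_2, then G is isomorphic to K_2. -/
open Finset

section Aux

variable {V : Type*} [Fintype V] [DecidableEq V] (G : SimpleGraph V)

lemma indep_subset {A B : Finset V} (hAB : A ⊆ B) (hB : IndepSet G B) : IndepSet G A :=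
  fun u hu w hw => hB u (hAB hu) w (hAB hw)

lemma indep_card_le_alpha {A : Finset V} (hA : IndepSet G A) : A.card ≤ alpha G := by
  classical
  refine Finset.le_sup ?_
  simp only [Finset.mem_filter, Finset.mem_powerset]
  exact ⟨Finset.subset_univ _, hA⟩

lemma pendant (h : W2 G) {X : Finset V} (hX : IndepSet G X) (hXc : IndepSet G Xᶜ)
    (hcard : X.card = alpha G) (hne : ∀ w : V, ∃ z, G.Adj w z)
    {v : V} (hv : v ∈ X) :
    ∃ y, G.Adj v y ∧ ∀ z, G.Adj y z → z = v := by
  classical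
  obtain ⟨S₁, -, S₂, -, hS₁, hS₂, c₁, c₂, hdisj, hA, hB⟩ :=
    h {v} (Finset.subset_univ _) (X.erase v) (Finset.subset_univ _)
      (by intro u hu w hw; simp only [Finset.mem_singleton] at hu hw; subst hu; subst hw
          exact G.irrefl)
      (indep_subset G (Finset.erase_subset _ _) hX)
      (by simp)
  have hvS₁ : v ∈ S₁ := hA (Finset.mem_singleton_self v)
  have hvS₂ : v ∉ S₂ := fun hv2 => (Finset.disjoint_left.mp hdisj hvS₁) hv2
  have hcard2 : (S₂ \ X.erase v).card = 1 := by
    rw [Finset.card_sdiff_of_subset hB, c₂]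
    have : (X.erase v).card + 1 = X.card := Finset.card_erase_add_one hv
    have h2 : alphaOn G Finset.univ = alpha G := rfl
    omega
  obtain ⟨y, hy⟩ := Finset.card_eq_one.mp hcard2
  have hyS₂ : y ∈ S₂ := by
    have : y ∈ S₂ \ X.erase v := by rw [hy]; exact Finset.mem_singleton_self y
    exact (Finset.mem_sdiff.mp this).1
  have hyne : y ∉ X.erase v := by
    have : y ∈ S₂ \ X.erase v := by rw [hy]; exact Finset.mem_singleton_self y
    exact (Finset.mem_sdiff.mp this).2
  have hyv : y ≠ v := fun h' => hvS₂ (h' ▸ hyS₂)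
  have hyX : y ∉ X := fun h' => hyne (Finset.mem_erase.mpr ⟨hyv, h'⟩)
  have key : ∀ z, G.Adj y z → z = v := by
    intro z hz
    have hzX : z ∈ X := by
      by_contra hzc
      exact hXc y (Finset.mem_compl.mpr hyX) z (Finset.mem_compl.mpr hzc) hz
    by_contra hzv
    have hzS₂ : z ∈ S₂ := hB (Finset.mem_erase.mpr ⟨hzv, hzX⟩)
    exact hS₂ y hyS₂ z hzS₂ hz
  obtain ⟨z, hz⟩ := hne y
  have : z = v := key z hz
  subst this
  exact ⟨y, hz.symm, key⟩

end Aux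

/-- K₂ is the only connected bipartite graph in W₂. -/
theorem stmt14 {V : Type*} [Fintype V] [DecidableEq V] (G : SimpleGraph V)
    (hconn : G.Connected)
    (hbip : ∃ X : Finset V, IndepSet G X ∧ IndepSet G Xᶜ)
    (h : W2 G) :
    Nonempty (G ≃g (⊤ : SimpleGraph (Fin 2))) := by

  classical
  obtain ⟨X, hX, hXc⟩ := hbip
  have hempty : IndepSet G (∅ : Finset V) := by
    intro u hu; exact absurd hu (Finset.notMem_empty u)
  -- 2α ≤ n
  obtain ⟨S₁, -, S₂, -, -, -, c₁, c₂, hdisj, -, -⟩ :=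
    h ∅ (Finset.subset_univ _) ∅ (Finset.subset_univ _) hempty hempty (by simp)
  have halpha2 : alpha G + alpha G ≤ Fintype.card V := by
    have := Finset.card_union_of_disjoint hdisj
    have hle : (S₁ ∪ S₂).card ≤ Fintype.card V := by
      simpa using Finset.card_le_univ (S₁ ∪ S₂)
    have h2 : alphaOn G Finset.univ = alpha G := rfl
    omega
  have hXle : X.card ≤ alpha G := indep_card_le_alpha G hX
  have hXcle : Xᶜ.card ≤ alpha G := indep_card_le_alpha G hXc
  have hsum : X.card + Xᶜ.card = Fintype.card V := by
    simpa using Finset.card_add_card_compl X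
  have hXcard : X.card = alpha G := by omega
  have hXccard : Xᶜ.card = alpha G := by omega
  -- V is nonempty and has at least 2 elements
  have hVne : Nonempty V := hconn.nonempty
  obtain ⟨v0⟩ := hVne
  have hαpos : 1 ≤ alpha G := by
    have : IndepSet G {v0} := by
      intro u hu w hw; simp only [Finset.mem_singleton] at hu hw
      subst hu; subst hw; exact G.irrefl
    have := indep_card_le_alpha G this
    simpa using this
  have hn2 : 2 ≤ Fintype.card V := by omega
  -- every vertex has a neighbor
  have hne : ∀ w : V, ∃ z, G.Adj w z := by
    intro w
    obtain ⟨w', hw'⟩ := Fintype.exists_ne_of_one_lt_card (by omega) w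
    obtain ⟨p⟩ := hconn.preconnected w w'
    cases p with
    | nil => exact absurd rfl hw'
    | cons hadj q => exact ⟨_, hadj⟩
  -- find a vertex in X
  obtain ⟨z0, hz0⟩ := hne v0
  have hXv : ∃ v, v ∈ X := by
    by_cases h0 : v0 ∈ X
    · exact ⟨v0, h0⟩
    · by_cases h1 : z0 ∈ X
      · exact ⟨z0, h1⟩
      · exact absurd hz0 (hXc v0 (Finset.mem_compl.mpr h0) z0 (Finset.mem_compl.mpr h1))
  obtain ⟨v, hv⟩ := hXv
  obtain ⟨y, hvy, hy⟩ := pendant G h hX hXc hXcard hne hv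
  have hyXc : y ∈ Xᶜ := by
    refine Finset.mem_compl.mpr fun hyX => ?_
    exact hX v hv y hyX hvy
  have hXcc : IndepSet G Xᶜᶜ := by simpa using hX
  obtain ⟨x, hyx, hx⟩ := pendant G h hXc hXcc hXccard hne hyXc
  have hxv : x = v := hy x hyx
  have hx' : ∀ z, G.Adj v z → z = y := fun z hz => hx z (by rwa [hxv])
  -- now: hy : neighbors of y are v only; hx : neighbors of v are y only
  have hall : ∀ w : V, w = v ∨ w = y := by
    have key : ∀ (a b : V), G.Walk a b → (a = v ∨ a = y) → (b = v ∨ b = y) := by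
      intro a b p
      induction p with
      | nil => exact id
      | cons hadj q ih =>
        intro hab
        apply ih
        rcases hab with rfl | rfl
        · exact Or.inr (hx' _ hadj)
        · exact Or.inl (hy _ hadj)
    intro w
    obtain ⟨p⟩ := hconn.preconnected v w
    exact key v w p (Or.inl rfl)
  have hvney : v ≠ y := G.ne_of_adj hvy
  have hyv : G.Adj y v := hvy.symm
  let f : V → Fin 2 := fun w => if w = v then 0 else 1
  let g : Fin 2 → V := ![v, y]
  have hleft : Function.LeftInverse g f := by
    intro w
    rcases hall w with rfl | rfl
    · simp [f, g]
    · simp [f, g, (Ne.symm hvney)]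
  have hright : Function.RightInverse g f := by
    intro i
    fin_cases i
    · simp [f, g]
    · simp [f, g, (Ne.symm hvney)]
  refine ⟨⟨⟨f, g, hleft, hright⟩, ?_⟩⟩
  intro a b
  simp only [SimpleGraph.top_adj, Equiv.coe_fn_mk]
  rcases hall a with rfl | rfl <;> rcases hall b with rfl | rfl
  · simp [f, G.irrefl]
  · simp [f, (Ne.symm hvney), hvy]
  · simp [f, (Ne.symm hvney), hyv]
  · simp [f, (Ne.symm hvney), G.irrefl]
end
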